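/- If D' is an open Euclidean disk whose intersection with the open unit disk D is nonempty and which is not contained in the closed unit disk (i.e., it 'sticks out'), then the hyperbolic area of D' ∩ D is infinite. -/
import Mathlib
set_option maxHeartbeats 1000000

open MeasureTheory

/-- The hyperbolic area of a measurable subset of the open unit disk,
in the Poincaré disk model. -/
noncomputable def areaH (A : Set (EuclideanSpace ℝ (Fin 2))) : ENNReal :=
  ∫⁻ x in A, ENNReal.ofReal (4 / (1 - ‖x‖ ^ 2) ^ 2) ∂volume

/-- An open Euclidean disk that meets the open unit disk but "sticks out" of the
closed unit disk has infinite hyperbolic area inside the unit disk. -/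
theorem stmt3 (c : EuclideanSpace ℝ (Fin 2)) (ρ : ℝ) (hρ : 0 < ρ)
    (hmeet : (Metric.ball c ρ ∩ Metric.ball (0 : EuclideanSpace ℝ (Fin 2)) 1).Nonempty)
    (hout : ¬ Metric.ball c ρ ⊆ Metric.closedBall (0 : EuclideanSpace ℝ (Fin 2)) 1) :
    areaH (Metric.ball c ρ ∩ Metric.ball (0 : EuclideanSpace ℝ (Fin 2)) 1) = ⊤ := by
  classical
  -- get a ∈ both balls, b ∈ ball c ρ with ‖b‖ > 1
  obtain ⟨a, hac, ha1⟩ := hmeet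
  rw [Metric.mem_ball, dist_zero_right] at ha1
  obtain ⟨b, hbc, hb1⟩ := Set.not_subset.1 hout
  rw [Metric.mem_closedBall, dist_zero_right, not_le] at hb1
  -- point p on the unit sphere inside ball c ρ, via IVT on the segment
  have hcont : ContinuousOn (fun t : ℝ => ‖(1 - t) • a + t • b‖) (Set.Icc 0 1) := by
    fun_prop
  have hIVT := intermediate_value_Icc (zero_le_one) hcont
  simp only [sub_zero, one_smul, zero_smul, add_zero, sub_self, zero_add] at hIVT
  have h1mem : (1 : ℝ) ∈ Set.Icc ‖a‖ ‖b‖ := ⟨le_of_lt ha1, le_of_lt hb1⟩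
  obtain ⟨t, ht, hpt⟩ := hIVT h1mem
  set p : EuclideanSpace ℝ (Fin 2) := (1 - t) • a + t • b with hp_def
  have hpnorm : ‖p‖ = 1 := hpt
  have hpball : p ∈ Metric.ball c ρ :=
    (convex_ball c ρ) hac hbc (by linarith [ht.2]) ht.1 (by ring)
  -- ε with ball p ε ⊆ ball c ρ
  obtain ⟨ε, hε, hεsub⟩ := Metric.mem_nhds_iff.1 (Metric.isOpen_ball.mem_nhds hpball)
  -- N with (1/2)^N < ε/2
  obtain ⟨N, hN⟩ := exists_pow_lt_of_lt_one (half_pos hε) (by norm_num : (1:ℝ)/2 < 1)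
  -- the family of small balls
  set r : ℕ → ℝ := fun k => (1/2 : ℝ) ^ (N + 1 + k) with hr_def
  have hr_pos : ∀ k, 0 < r k := fun k => by positivity
  have hr_le : ∀ k, r k ≤ (1/2 : ℝ) ^ (N + 1) := fun k => by
    simpa [hr_def] using pow_le_pow_of_le_one (by norm_num : (0:ℝ) ≤ 1/2) (by norm_num : (1:ℝ)/2 ≤ 1)
      (Nat.le_add_right (N + 1) k)
  have hr_half : ∀ k, r k ≤ 1 / 2 := fun k => by
    calc r k ≤ (1/2 : ℝ) ^ (N + 1) := hr_le k
    _ ≤ (1/2 : ℝ) ^ 1 := pow_le_pow_of_le_one (by norm_num : (0:ℝ) ≤ 1/2) (by norm_num : (1:ℝ)/2 ≤ 1) (by omega)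
    _ = 1/2 := by norm_num
  have hr_eps : ∀ k, 2 * r k < ε := fun k => by
    have h1 : (1/2 : ℝ) ^ (N + 1) = (1/2) ^ N * (1/2) := pow_succ _ _
    have := hr_le k
    nlinarith [hr_pos k, pow_pos (by norm_num : (0:ℝ) < 1/2) N]
  have hr_mono : ∀ k l, k < l → r l ≤ r k / 2 := by
    intro k l hkl
    have : r l ≤ (1/2 : ℝ) ^ (N + 1 + k + 1) :=
      pow_le_pow_of_le_one (by norm_num : (0:ℝ) ≤ 1/2) (by norm_num : (1:ℝ)/2 ≤ 1) (by omega)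
    calc r l ≤ (1/2 : ℝ) ^ (N + 1 + k + 1) := this
    _ = r k / 2 := by rw [hr_def]; rw [pow_succ]; ring
  set q : ℕ → EuclideanSpace ℝ (Fin 2) := fun k => (1 - r k) • p with hq_def
  set B : ℕ → Set (EuclideanSpace ℝ (Fin 2)) := fun k => Metric.ball (q k) (r k / 4) with hB_def
  have hqnorm : ∀ k, ‖q k‖ = 1 - r k := fun k => by
    rw [hq_def]
    simp only [norm_smul, hpnorm, mul_one, Real.norm_eq_abs]
    rw [abs_of_nonneg (by linarith [hr_half k])]
  have hqp : ∀ k, ‖q k - p‖ = r k := fun k => by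
    have : q k - p = (-(r k)) • p := by
      simp only [hq_def]
      module
    rw [this, norm_smul, hpnorm, mul_one, Real.norm_eq_abs, abs_neg,
      abs_of_nonneg (hr_pos k).le]
  -- each small ball is in the target set
  have hBsub : ∀ k, B k ⊆ Metric.ball c ρ ∩ Metric.ball (0 : EuclideanSpace ℝ (Fin 2)) 1 := by
    intro k x hx
    rw [hB_def, Metric.mem_ball, dist_eq_norm] at hx
    constructor
    · apply hεsub
      rw [Metric.mem_ball, dist_eq_norm]
      calc ‖x - p‖ ≤ ‖x - q k‖ + ‖q k - p‖ := by
            simpa using norm_sub_le_norm_sub_add_norm_sub x (q k) p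
      _ < r k / 4 + r k := by linarith [hqp k, hx]
      _ < ε := by linarith [hr_eps k, hr_pos k]
    · rw [Metric.mem_ball, dist_zero_right]
      calc ‖x‖ ≤ ‖x - q k‖ + ‖q k‖ := by
            simpa using norm_add_le (x - q k) (q k)
      _ < r k / 4 + (1 - r k) := by linarith [hqnorm k, hx]
      _ < 1 := by linarith [hr_pos k]
  -- balls are pairwise disjoint
  have hdisj : Pairwise (Function.onFun Disjoint B) := by
    have key : ∀ k l, k < l → Disjoint (B k) (B l) := by
      intro k l hkl
      apply Metric.ball_disjoint_ball
      have hd : dist (q k) (q l) = r k - r l := by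
        rw [dist_eq_norm]
        have h0 : q k - q l = (r l - r k) • p := by
          simp only [hq_def]
          module
        rw [h0, norm_smul, hpnorm, mul_one, Real.norm_eq_abs,
          abs_of_nonpos (by linarith [hr_mono k l hkl, hr_pos l])]
        ring
      have := hr_mono k l hkl
      have := hr_pos l
      rw [hd]; linarith
    intro k l hkl
    rcases lt_or_gt_of_ne hkl with h | h
    · exact key k l h
    · exact (key l k h).symm
  have hBmeas : ∀ k, MeasurableSet (B k) := fun k => measurableSet_ball
  -- lower bound on each ball
  set f : EuclideanSpace ℝ (Fin 2) → ENNReal := fun x => ENNReal.ofReal (4 / (1 - ‖x‖ ^ 2) ^ 2) with hf_def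
  have hfmeas : Measurable f := by
    apply Measurable.ennreal_ofReal
    fun_prop
  set V : ENNReal := volume (Metric.ball (0 : EuclideanSpace ℝ (Fin 2)) 1) with hV_def
  have hVpos : 0 < V := Metric.measure_ball_pos _ _ one_pos
  have hconst : ∀ k, ENNReal.ofReal (1/64) * V ≤ ∫⁻ x in B k, f x := by
    intro k
    have hlow : ∀ x ∈ B k, ENNReal.ofReal (4 / (16 * r k ^ 2)) ≤ f x := by
      intro x hx
      rw [hB_def, Metric.mem_ball, dist_eq_norm] at hx
      have h1 : ‖x‖ ≤ 1 := by
        calc ‖x‖ ≤ ‖x - q k‖ + ‖q k‖ := by simpa using norm_add_le (x - q k) (q k)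
        _ ≤ r k / 4 + (1 - r k) := by linarith [hqnorm k, hx]
        _ ≤ 1 := by linarith [hr_pos k]
      have h1' : ‖x‖ < 1 := by
        calc ‖x‖ ≤ ‖x - q k‖ + ‖q k‖ := by simpa using norm_add_le (x - q k) (q k)
        _ < r k / 4 + (1 - r k) := by linarith [hqnorm k, hx]
        _ < 1 := by linarith [hr_pos k]
      have h2 : 1 - 2 * r k ≤ ‖x‖ := by
        have := norm_sub_norm_le (q k) x
        rw [← neg_sub x (q k), norm_neg] at this
        have := hqnorm k
        nlinarith [hx, hr_pos k]
      have h3 : 0 < 1 - ‖x‖ ^ 2 := by nlinarith [norm_nonneg x]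
      have h4 : 1 - ‖x‖ ^ 2 ≤ 4 * r k := by nlinarith [norm_nonneg x, hr_half k, hr_pos k]
      apply ENNReal.ofReal_le_ofReal
      have h5 : (1 - ‖x‖ ^ 2) ^ 2 ≤ 16 * r k ^ 2 := by nlinarith
      exact div_le_div_of_nonneg_left (by norm_num) (by positivity) h5
    calc ENNReal.ofReal (1/64) * V
        = ENNReal.ofReal (4 / (16 * r k ^ 2)) * volume (B k) := by
          rw [hB_def, Measure.addHaar_ball _ _ (by linarith [hr_pos k] : (0:ℝ) ≤ r k / 4),
            ← hV_def, finrank_euclideanSpace_fin, ← mul_assoc,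
            ← ENNReal.ofReal_mul (by positivity)]
          congr 2
          have := hr_pos k
          field_simp
          ring
      _ = ∫⁻ _ in B k, ENNReal.ofReal (4 / (16 * r k ^ 2)) := by
          rw [setLIntegral_const]
      _ ≤ ∫⁻ x in B k, f x := setLIntegral_mono hfmeas hlow
  -- put it together
  rw [areaH, ← top_le_iff]
  calc (⊤ : ENNReal) = ∑' _ : ℕ, ENNReal.ofReal (1/64) * V := by
        rw [ENNReal.tsum_const_eq_top_of_ne_zero]
        exact mul_ne_zero (ne_of_gt (ENNReal.ofReal_pos.2 (by norm_num))) hVpos.ne'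
    _ ≤ ∑' k, ∫⁻ x in B k, f x := ENNReal.tsum_le_tsum hconst
    _ = ∫⁻ x in ⋃ k, B k, f x := (lintegral_iUnion hBmeas hdisj f).symm
    _ ≤ ∫⁻ x in Metric.ball c ρ ∩ Metric.ball (0 : EuclideanSpace ℝ (Fin 2)) 1, f x :=
        lintegral_mono_set (Set.iUnion_subset hBsub)
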